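/- arXiv:2304.06965 — 3 statements merged into one kernel-verified Lean document; each statement's English description precedes it below -/
import Mathlib

section
/- Let (α_ℓ)_{ℓ∈ℕ} be a sequence of real numbers with 0 ≤ α_ℓ ≤ 1 for all ℓ and Σ_ℓ α_ℓ = n+1 for some n ∈ ℕ. Then Σ_{ℓ=0}^∞ α_ℓ (2ℓ+1) ≥ (n+1)². -/
open scoped ENNReal

lemma aux_sum_odd (n : ℕ) :
    ∑ ℓ ∈ Finset.range (n + 1), (2 * (ℓ : ℝ) + 1) = ((n : ℝ) + 1) ^ 2 := by
  induction n with
  | zero => simp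
  | succ m ih =>
    rw [Finset.sum_range_succ, ih]
    push_cast
    ring

theorem stmt_6 (α : ℕ → ℝ) (n : ℕ) (h0 : ∀ ℓ, 0 ≤ α ℓ) (h1 : ∀ ℓ, α ℓ ≤ 1)
    (hsum : Summable α) (htot : ∑' ℓ : ℕ, α ℓ = (n : ℝ) + 1) :
    ((n : ℝ≥0∞) + 1) ^ 2 ≤ ∑' ℓ : ℕ, ENNReal.ofReal (α ℓ * (2 * (ℓ : ℝ) + 1)) := by
  set f : ℕ → ℝ := fun ℓ => α ℓ * (2 * (ℓ : ℝ) + 1) with hf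
  have hfnn : ∀ ℓ, 0 ≤ f ℓ := fun ℓ => mul_nonneg (h0 ℓ) (by positivity)
  by_cases htop : ∑' ℓ : ℕ, ENNReal.ofReal (f ℓ) = ⊤
  · rw [htop]; exact le_top
  -- f is summable
  have hfsum : Summable f := by
    set g : ℕ → NNReal := fun ℓ => (⟨f ℓ, hfnn ℓ⟩ : NNReal) with hg
    have hco : ∀ ℓ, ENNReal.ofReal (f ℓ) = (g ℓ : ℝ≥0∞) := by
      intro ℓ
      rw [ENNReal.ofReal, Real.toNNReal_of_nonneg (hfnn ℓ)]
      rfl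
    have : ∑' ℓ, (g ℓ : ℝ≥0∞) ≠ ⊤ := by
      rwa [← tsum_congr hco]
    have hgs : Summable g := ENNReal.tsum_coe_ne_top_iff_summable.mp this
    have : Summable (fun ℓ => (g ℓ : ℝ)) := NNReal.summable_coe.mpr hgs
    exact this
  -- lower bound sequence
  set c : ℕ → ℝ := fun ℓ => if ℓ ≤ n then 2 * (ℓ : ℝ) - 2 * n else 0 with hc
  have hcsum : Summable c := by
    apply summable_of_ne_finset_zero (s := Finset.range (n + 1))
    intro ℓ hℓ
    simp only [Finset.mem_range, not_lt] at hℓ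
    simp [hc, Nat.lt_of_lt_of_le (Nat.lt_succ_self n) hℓ |>.not_ge,
      (Nat.lt_of_succ_le hℓ).not_ge]
  have hctsum : ∑' ℓ, c ℓ = -(n : ℝ) * ((n : ℝ) + 1) := by
    rw [tsum_eq_sum (s := Finset.range (n + 1)) (by
      intro ℓ hℓ
      simp only [Finset.mem_range, not_lt] at hℓ
      simp [hc, (Nat.lt_of_succ_le hℓ).not_ge])]
    have h2 : ∑ ℓ ∈ Finset.range (n + 1), c ℓ
        = ∑ ℓ ∈ Finset.range (n + 1), ((2 * (ℓ : ℝ) + 1) - (2 * (n : ℝ) + 1)) := by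
      apply Finset.sum_congr rfl
      intro ℓ hℓ
      simp only [Finset.mem_range, Nat.lt_succ_iff] at hℓ
      simp only [hc, if_pos hℓ]; ring
    rw [h2, Finset.sum_sub_distrib, aux_sum_odd, Finset.sum_const, Finset.card_range]
    push_cast
    ring
  -- pointwise bound
  have hpt : ∀ ℓ, (2 * (n : ℝ) + 1) * α ℓ + c ℓ ≤ f ℓ := by
    intro ℓ
    by_cases hln : ℓ ≤ n
    · simp only [hc, hf, if_pos hln]
      have h1' : α ℓ ≤ 1 := h1 ℓ
      have hle : 2 * (ℓ : ℝ) - 2 * n ≤ 0 := by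
        have : (ℓ : ℝ) ≤ n := Nat.cast_le.mpr hln
        linarith
      nlinarith [h0 ℓ]
    · simp only [hc, hf, if_neg hln]
      have : (n : ℝ) ≤ ℓ := Nat.cast_le.mpr (le_of_not_ge hln)
      nlinarith [h0 ℓ]
  have hlb : ((n : ℝ) + 1) ^ 2 ≤ ∑' ℓ, f ℓ := by
    have hsum' : Summable (fun ℓ => (2 * (n : ℝ) + 1) * α ℓ + c ℓ) :=
      (hsum.mul_left _).add hcsum
    have := hsum'.tsum_le_tsum hpt hfsum
    rw [(hsum.mul_left _).tsum_add hcsum, tsum_mul_left, htot, hctsum] at this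
    nlinarith [this]
  calc ((n : ℝ≥0∞) + 1) ^ 2 = ENNReal.ofReal (((n : ℝ) + 1) ^ 2) := by
        rw [ENNReal.ofReal_pow (by positivity), ENNReal.ofReal_add (by positivity) zero_le_one]
        simp
      _ ≤ ENNReal.ofReal (∑' ℓ, f ℓ) := ENNReal.ofReal_le_ofReal hlb
      _ = ∑' ℓ, ENNReal.ofReal (f ℓ) := ENNReal.ofReal_tsum_of_nonneg hfnn hfsum
end

section
/- Let (α_ℓ) be a sequence with 0 ≤ α_ℓ ≤ B for all ℓ (B > 0) and Σ_ℓ α_ℓ ≥ c(n+1) for some c with 0 < c ≤ B. Then Σ_{ℓ=0}^∞ α_ℓ(2ℓ+1) ≥ B · ⌊(n+1)c/B⌋². -/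
open scoped ENNReal

lemma sum_odd_real (m : ℕ) : ∑ ℓ ∈ Finset.range m, (2 * (ℓ : ℝ) + 1) = (m : ℝ) ^ 2 := by
  induction m with
  | zero => simp
  | succ k ih => rw [Finset.sum_range_succ, ih]; push_cast; ring

theorem stmt_7 (α : ℕ → ℝ) (B c : ℝ) (n : ℕ) (hB : 0 < B)
    (h0 : ∀ ℓ, 0 ≤ α ℓ) (h1 : ∀ ℓ, α ℓ ≤ B) (hc : 0 < c) (hcB : c ≤ B)
    (hsum : Summable α) (htot : c * ((n : ℝ) + 1) ≤ ∑' ℓ : ℕ, α ℓ) :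
    ENNReal.ofReal (B * ((⌊((n : ℝ) + 1) * c / B⌋₊ : ℕ) : ℝ) ^ 2) ≤
      ∑' ℓ : ℕ, ENNReal.ofReal (α ℓ * (2 * (ℓ : ℝ) + 1)) := by
  set m := ⌊((n : ℝ) + 1) * c / B⌋₊ with hmdef
  set g : ℕ → ℝ := fun ℓ => α ℓ * (2 * (ℓ : ℝ) + 1) with hgdef
  have hgnn : ∀ ℓ, 0 ≤ g ℓ := fun ℓ => by
    have := h0 ℓ; have : (0:ℝ) ≤ 2 * (ℓ:ℝ) + 1 := by positivity
    exact mul_nonneg (h0 ℓ) this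
  rcases Nat.eq_zero_or_pos m with hm0 | hm1
  · simp [hm0]
  have hA : B * m ≤ ∑' ℓ, α ℓ := by
    have hfl : (m : ℝ) ≤ ((n : ℝ) + 1) * c / B :=
      Nat.floor_le (by positivity)
    have h1' : B * m ≤ ((n : ℝ) + 1) * c := by
      rw [mul_comm]
      exact (le_div_iff₀ hB).mp hfl
    calc B * m ≤ ((n : ℝ) + 1) * c := h1'
      _ = c * ((n : ℝ) + 1) := by ring
      _ ≤ ∑' ℓ, α ℓ := htot
  by_cases hg : Summable g
  · rw [← ENNReal.ofReal_tsum_of_nonneg hgnn hg]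
    apply ENNReal.ofReal_le_ofReal
    -- real inequality : B * m^2 ≤ ∑' ℓ, g ℓ
    have htailα : Summable fun i => α (i + m) := (summable_nat_add_iff m).2 hsum
    have htailg : Summable fun i => g (i + m) := (summable_nat_add_iff m).2 hg
    have hsplitg := hg.sum_add_tsum_nat_add m
    have hsplitα := hsum.sum_add_tsum_nat_add m
    have hmpos : (1:ℝ) ≤ (m:ℝ) := by exact_mod_cast hm1
    have h2 : (2 * (m:ℝ) - 1) * ∑' i, α (i + m) ≤ ∑' i, g (i + m) := by
      rw [← tsum_mul_left]
      refine (htailα.mul_left _).tsum_le_tsum ?_ htailg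
      intro i
      have hi : (0:ℝ) ≤ (i:ℝ) := Nat.cast_nonneg i
      have hα := h0 (i + m)
      have hcast : ((i + m : ℕ) : ℝ) = (i:ℝ) + (m:ℝ) := by push_cast; ring
      simp only [hgdef, hcast]
      nlinarith
    have h4 : ∀ ℓ ∈ Finset.range m,
        B * (2 * (ℓ:ℝ) + 1) - B * (2 * (m:ℝ) - 1) ≤ g ℓ - α ℓ * (2 * (m:ℝ) - 1) := by
      intro ℓ hℓ
      have hℓm : (ℓ:ℝ) + 1 ≤ (m:ℝ) := by
        exact_mod_cast Nat.succ_le_of_lt (Finset.mem_range.mp hℓ)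
      have := h1 ℓ
      simp only [hgdef]
      nlinarith
    have h5 : B * (m:ℝ)^2 - B * m * (2 * (m:ℝ) - 1) ≤
        (∑ ℓ ∈ Finset.range m, g ℓ) - (2 * (m:ℝ) - 1) * ∑ ℓ ∈ Finset.range m, α ℓ := by
      have := Finset.sum_le_sum h4
      rw [Finset.sum_sub_distrib, Finset.sum_sub_distrib, ← Finset.mul_sum, sum_odd_real,
        Finset.sum_const, Finset.card_range] at this
      have hαsum : ∑ ℓ ∈ Finset.range m, α ℓ * (2 * (m:ℝ) - 1)
          = (2 * (m:ℝ) - 1) * ∑ ℓ ∈ Finset.range m, α ℓ := by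
        rw [Finset.mul_sum]; exact Finset.sum_congr rfl fun _ _ => mul_comm _ _
      rw [hαsum] at this
      rw [nsmul_eq_mul] at this
      nlinarith [this]
    set Sα := ∑ ℓ ∈ Finset.range m, α ℓ with hSα
    set Sg := ∑ ℓ ∈ Finset.range m, g ℓ with hSg
    have hA' : ∑' i, α (i + m) = (∑' ℓ, α ℓ) - Sα := by linarith [hsplitα]
    have h6 : (2 * (m:ℝ) - 1) * (B * m - Sα) ≤ (2 * (m:ℝ) - 1) * ((∑' ℓ, α ℓ) - Sα) := by
      apply mul_le_mul_of_nonneg_left _ (by linarith)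
      linarith
    rw [hA'] at h2
    nlinarith [hsplitg]
  · have : ∑' ℓ : ℕ, ENNReal.ofReal (g ℓ) = ⊤ := by
      by_contra hne
      apply hg
      have hs : Summable fun ℓ => (ENNReal.ofReal (g ℓ)).toReal :=
        ENNReal.summable_toReal hne
      have : ∀ ℓ, (ENNReal.ofReal (g ℓ)).toReal = g ℓ := fun ℓ =>
        ENNReal.toReal_ofReal (hgnn ℓ)
      simpa [this] using hs
    rw [this]
    exact le_top
end

section
/- Under the hypotheses of the abstract mean-dispersion principle with λ_ℓ = 2ℓ+1, if in addition equality Σ_{k=0}^n Σ_ℓ λ_ℓ|⟨f_k,e_ℓ⟩|² = (n+1)² holds for every n ≤ n₀, then each f_k (0 ≤ k ≤ n₀) equals c_k e_k for some c_k ∈ ℂ with |c_k| = 1. -/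
open scoped ENNReal

theorem stmt_11 {H : Type*} [NormedAddCommGroup H] [InnerProductSpace ℂ H]
    [CompleteSpace H] (e : HilbertBasis ℕ ℂ H) (f : ℕ → H) (hf : Orthonormal ℂ f)
    (n₀ : ℕ)
    (heq : ∀ n ≤ n₀,
      ∑ k ∈ Finset.range (n + 1), ∑' ℓ : ℕ,
        ENNReal.ofReal ((2 * (ℓ : ℝ) + 1) * ‖(inner ℂ (f k) (e ℓ) : ℂ)‖ ^ 2) =
        ((n : ℝ≥0∞) + 1) ^ 2) :
    ∃ c : ℕ → ℂ, ∀ k ≤ n₀, ‖c k‖ = 1 ∧ f k = c k • e k := by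
  classical
  -- Step A: for each k, the squared coefficients sum to 1
  have hA : ∀ k, HasSum (fun ℓ : ℕ => ‖(inner ℂ (f k) (e ℓ) : ℂ)‖ ^ 2) 1 := by
    intro k
    have h := e.hasSum_inner_mul_inner (f k) (f k)
    have hfk : (inner ℂ (f k) (f k) : ℂ) = 1 := by
      rw [inner_self_eq_norm_sq_to_K, hf.1 k]; norm_num
    rw [hfk] at h
    have hco : (fun ℓ : ℕ => (inner ℂ (f k) (e ℓ) : ℂ) * (inner ℂ (e ℓ) (f k) : ℂ)) =
        fun ℓ : ℕ => ((‖(inner ℂ (f k) (e ℓ) : ℂ)‖ ^ 2 : ℝ) : ℂ) := by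
      funext ℓ
      rw [← inner_conj_symm (e ℓ) (f k), Complex.mul_conj']
      push_cast
      ring
    rw [hco] at h
    have : ((1 : ℝ) : ℂ) = (1 : ℂ) := by norm_num
    rw [← this] at h
    exact Complex.hasSum_ofReal.mp h
  have hA' : ∀ k, ∑' ℓ : ℕ, ENNReal.ofReal (‖(inner ℂ (f k) (e ℓ) : ℂ)‖ ^ 2) = 1 := by
    intro k
    rw [← ENNReal.ofReal_tsum_of_nonneg (fun ℓ => sq_nonneg _) (hA k).summable,
      (hA k).tsum_eq, ENNReal.ofReal_one]
  -- Step B: telescoping gives T n = 2n + 1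
  have hT : ∀ n ≤ n₀, ∑' ℓ : ℕ,
      ENNReal.ofReal ((2 * (ℓ : ℝ) + 1) * ‖(inner ℂ (f n) (e ℓ) : ℂ)‖ ^ 2) =
      2 * (n : ℝ≥0∞) + 1 := by
    intro n hn
    match n with
    | 0 =>
      have h0 := heq 0 hn
      have h1 : ∑' ℓ : ℕ,
          ENNReal.ofReal ((2 * (ℓ : ℝ) + 1) * ‖(inner ℂ (f 0) (e ℓ) : ℂ)‖ ^ 2) =
          (((0 : ℕ) : ℝ≥0∞) + 1) ^ 2 := by
        rw [← h0]
        exact (Finset.sum_range_one (f := fun k => ∑' ℓ : ℕ,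
          ENNReal.ofReal ((2 * (ℓ : ℝ) + 1) * ‖(inner ℂ (f k) (e ℓ) : ℂ)‖ ^ 2))).symm
      rw [h1]
      norm_num
    | m + 1 =>
      have h2 := heq m (le_trans (Nat.le_succ m) hn)
      have h1 := heq (m + 1) hn
      have h3 : ((m : ℝ≥0∞) + 1) ^ 2 + ∑' ℓ : ℕ,
          ENNReal.ofReal ((2 * (ℓ : ℝ) + 1) * ‖(inner ℂ (f (m + 1)) (e ℓ) : ℂ)‖ ^ 2) =
          (((m + 1 : ℕ) : ℝ≥0∞) + 1) ^ 2 := by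
        rw [← h2]
        exact (Finset.sum_range_succ _ (m + 1)).symm.trans h1
      have hne : ((m : ℝ≥0∞) + 1) ^ 2 ≠ ∞ := by
        apply ENNReal.pow_ne_top
        exact ENNReal.add_ne_top.2 ⟨ENNReal.natCast_ne_top m, ENNReal.one_ne_top⟩
      have h4 : ((m : ℝ≥0∞) + 1) ^ 2 + ∑' ℓ : ℕ,
          ENNReal.ofReal ((2 * (ℓ : ℝ) + 1) * ‖(inner ℂ (f (m + 1)) (e ℓ) : ℂ)‖ ^ 2) =
          ((m : ℝ≥0∞) + 1) ^ 2 + (2 * ((m + 1 : ℕ) : ℝ≥0∞) + 1) := by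
        rw [h3]; push_cast; ring
      exact (ENNReal.add_right_inj hne).mp h4
  -- Step C: strong induction
  have key : ∀ k, k ≤ n₀ → ∃ c : ℂ, ‖c‖ = 1 ∧ f k = c • e k := by
    intro k
    induction k using Nat.strong_induction_on with
    | _ k IH =>
      intro hk
      -- coefficients below k vanish
      have h0 : ∀ j, j < k → (inner ℂ (f k) (e j) : ℂ) = 0 := by
        intro j hj
        obtain ⟨c, hc1, hc2⟩ := IH j hj (le_trans hj.le hk)
        have hkj : (inner ℂ (f k) (f j) : ℂ) = 0 := hf.2 hj.ne'
        rw [hc2, inner_smul_right] at hkj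
        have hcne : c ≠ 0 := by
          intro h; rw [h, norm_zero] at hc1; norm_num at hc1
        exact (mul_eq_zero.mp hkj).resolve_left hcne
      -- pointwise decomposition
      have hpt : ∀ ℓ : ℕ,
          ENNReal.ofReal ((2 * (ℓ : ℝ) + 1) * ‖(inner ℂ (f k) (e ℓ) : ℂ)‖ ^ 2) =
          ENNReal.ofReal (2 * (k : ℝ) + 1) *
            ENNReal.ofReal (‖(inner ℂ (f k) (e ℓ) : ℂ)‖ ^ 2) +
          ENNReal.ofReal ((2 * (ℓ : ℝ) - 2 * (k : ℝ)) * ‖(inner ℂ (f k) (e ℓ) : ℂ)‖ ^ 2) := by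
        intro ℓ
        rcases lt_or_ge ℓ k with h | h
        · simp [h0 ℓ h]
        · have hkl : (k : ℝ) ≤ (ℓ : ℝ) := by exact_mod_cast h
          rw [← ENNReal.ofReal_mul (by positivity),
            ← ENNReal.ofReal_add (by positivity)
              (mul_nonneg (by linarith) (sq_nonneg _))]
          congr 1
          ring
      have hsum := hT k hk
      rw [tsum_congr hpt, ENNReal.tsum_add, ENNReal.tsum_mul_left, hA' k, mul_one] at hsum
      have hcst : ENNReal.ofReal (2 * (k : ℝ) + 1) = 2 * (k : ℝ≥0∞) + 1 := by
        rw [ENNReal.ofReal_add (by positivity) zero_le_one, ENNReal.ofReal_mul (by norm_num),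
          ENNReal.ofReal_natCast, ENNReal.ofReal_one, ENNReal.ofReal_ofNat]
      rw [hcst] at hsum
      have hne : 2 * (k : ℝ≥0∞) + 1 ≠ ∞ := by
        exact ENNReal.add_ne_top.2 ⟨ENNReal.mul_ne_top (by norm_num)
          (ENNReal.natCast_ne_top k), ENNReal.one_ne_top⟩
      have hzero_sum : ∑' ℓ : ℕ,
          ENNReal.ofReal ((2 * (ℓ : ℝ) - 2 * (k : ℝ)) * ‖(inner ℂ (f k) (e ℓ) : ℂ)‖ ^ 2) = 0 := by
        refine (ENNReal.add_right_inj hne).mp ?_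
        rw [add_zero]
        exact hsum
      have hgt : ∀ ℓ, k < ℓ → (inner ℂ (f k) (e ℓ) : ℂ) = 0 := by
        intro ℓ hℓ
        have hg := ENNReal.tsum_eq_zero.mp hzero_sum ℓ
        rw [ENNReal.ofReal_eq_zero] at hg
        have hkl : (k : ℝ) < (ℓ : ℝ) := by exact_mod_cast hℓ
        have ha : ‖(inner ℂ (f k) (e ℓ) : ℂ)‖ ^ 2 = 0 := by nlinarith [sq_nonneg ‖(inner ℂ (f k) (e ℓ) : ℂ)‖]
        have := pow_eq_zero_iff (n := 2) (by norm_num) |>.mp ha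
        exact norm_eq_zero.mp this
      have hzero : ∀ ℓ, ℓ ≠ k → (inner ℂ (f k) (e ℓ) : ℂ) = 0 := by
        intro ℓ hℓ
        rcases lt_or_gt_of_ne hℓ with h | h
        · exact h0 ℓ h
        · exact hgt ℓ h
      -- the diagonal coefficient has norm 1
      have hnorm : ‖(inner ℂ (f k) (e k) : ℂ)‖ = 1 := by
        have h1 : ∑' ℓ : ℕ, ‖(inner ℂ (f k) (e ℓ) : ℂ)‖ ^ 2 = ‖(inner ℂ (f k) (e k) : ℂ)‖ ^ 2 :=
          tsum_eq_single k (fun ℓ hℓ => by rw [hzero ℓ hℓ]; simp)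
        have h2 : ‖(inner ℂ (f k) (e k) : ℂ)‖ ^ 2 = 1 := by rw [← h1, (hA k).tsum_eq]
        nlinarith [norm_nonneg (inner ℂ (f k) (e k) : ℂ)]
      refine ⟨inner ℂ (e k) (f k), ?_, ?_⟩
      · rw [← norm_inner_symm]; exact hnorm
      · have hr : HasSum (fun ℓ : ℕ => e.repr (f k) ℓ • e ℓ) (f k) := e.hasSum_repr (f k)
        have hfun : (fun ℓ : ℕ => e.repr (f k) ℓ • e ℓ) =
            fun ℓ : ℕ => if ℓ = k then (inner ℂ (e k) (f k) : ℂ) • e k else 0 := by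
          funext ℓ
          rw [e.repr_apply_apply]
          by_cases hℓ : ℓ = k
          · subst hℓ; simp
          · have : (inner ℂ (e ℓ) (f k) : ℂ) = 0 := by
              rw [← inner_conj_symm, hzero ℓ hℓ, map_zero]
            simp [hℓ, this]
        rw [hfun] at hr
        exact hr.unique (hasSum_ite_eq k _)
  choose g hg using key
  refine ⟨fun k => if h : k ≤ n₀ then g k h else 1, fun k hk => ?_⟩
  simp only [dif_pos hk]
  exact hg k hk
end
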